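/- Let (α,β) be a reaction network (not necessarily zero-one) with s species whose stoichiometric matrix N has rank 2, and let W be a conservation-law matrix. For every κ ∈ ℝ^m_{>0} and every steady state x ∈ ℝ^s (a point with f(κ,x) = 0) at which det Jac_h(κ,x) ≠ 0, the following are equivalent: (a) every nonzero complex eigenvalue of Jac_f(κ,x) has negative real part; (b) Σ_{i=1}^s (∂f_i/∂x_i)(κ,x) < 0 and det Jac_h(κ,x) > 0. -/

import Mathlib

noncomputable section

/-- The stoichiometric matrix `N = β − α` of a reaction network, as a real matrix. -/
def stoich {s m : ℕ} (α β : Matrix (Fin s) (Fin m) ℕ) : Matrix (Fin s) (Fin m) ℝ :=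
  fun i j => (β i j : ℝ) - (α i j : ℝ)

/-- The mass-action species-formation rate function:
`f_i(κ,x) = Σ_j N_{ij} κ_j Π_l x_l^{α_{lj}}`. -/
def rateFun {s m : ℕ} (α β : Matrix (Fin s) (Fin m) ℕ)
    (κ : Fin m → ℝ) (x : Fin s → ℝ) (i : Fin s) : ℝ :=
  ∑ j, stoich α β i j * κ j * ∏ l, x l ^ (α l j)

/-- The Jacobian matrix of `f` with respect to `x`. -/
def jacF {s m : ℕ} (α β : Matrix (Fin s) (Fin m) ℕ)
    (κ : Fin m → ℝ) (x : Fin s → ℝ) : Matrix (Fin s) (Fin s) ℝ :=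
  fun i l => deriv (fun t => rateFun α β κ (Function.update x l t) i) (x l)

/-- The Jacobian of the steady-state system augmented by conservation laws: the row with index
`piv k` is the `k`-th row of the conservation-law matrix `W`, and the remaining rows are the
corresponding rows of `Jac_f`. -/
def jacH {s m d : ℕ} (α β : Matrix (Fin s) (Fin m) ℕ)
    (W : Matrix (Fin d) (Fin s) ℝ) (piv : Fin d → Fin s)
    (κ : Fin m → ℝ) (x : Fin s → ℝ) : Matrix (Fin s) (Fin s) ℝ :=
  fun i l => if h : ∃ k, piv k = i then W (Classical.choose h) l else jacF α β κ x i l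

open Finset Polynomial Matrix

/-! ### Auxiliary lemmas -/

lemma quad_roots_neg_re_iff (b c : ℝ) :
    (∀ μ : ℂ, μ ^ 2 + (b : ℂ) * μ + (c : ℂ) = 0 → μ.re < 0) ↔ (0 < b ∧ 0 < c) := by
  constructor
  · intro h
    obtain ⟨w, hw⟩ : ∃ w : ℂ, w ^ 2 = (b : ℂ) ^ 2 - 4 * c :=
      IsAlgClosed.exists_pow_nat_eq _ (by norm_num : (0:ℕ) < 2)
    obtain ⟨r₁, r₂, hsum, hprod⟩ : ∃ r₁ r₂ : ℂ, r₁ + r₂ = -(b : ℂ) ∧ r₁ * r₂ = (c : ℂ) := by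
      refine ⟨(-(b : ℂ) + w) / 2, (-(b : ℂ) - w) / 2, by ring, ?_⟩
      have : ((-(b:ℂ) + w)/2) * ((-(b:ℂ) - w)/2) = ((b:ℂ)^2 - w^2)/4 := by ring
      rw [this, hw]; ring
    have hfac : ∀ z : ℂ, z ^ 2 + (b : ℂ) * z + (c : ℂ) = (z - r₁) * (z - r₂) := by
      intro z
      have : (z - r₁) * (z - r₂) = z ^ 2 - (r₁ + r₂) * z + r₁ * r₂ := by ring
      rw [this, hsum, hprod]; ring
    have hroot₁ : r₁ ^ 2 + (b : ℂ) * r₁ + (c : ℂ) = 0 := by rw [hfac]; ring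
    have hroot₂ : r₂ ^ 2 + (b : ℂ) * r₂ + (c : ℂ) = 0 := by rw [hfac]; ring
    have hre₁ : r₁.re < 0 := h r₁ hroot₁
    have hre₂ : r₂.re < 0 := h r₂ hroot₂
    have hb : 0 < b := by
      have := congrArg Complex.re hsum
      simp at this
      linarith
    refine ⟨hb, ?_⟩
    have hc0 : c = r₁.re * r₂.re - r₁.im * r₂.im := by
      have := congrArg Complex.re hprod
      simpa [Complex.mul_re] using this.symm
    have hconj : (starRingEnd ℂ) r₁ = r₁ ∨ (starRingEnd ℂ) r₁ = r₂ := by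
      have hcr : ((starRingEnd ℂ) r₁) ^ 2 + (b : ℂ) * ((starRingEnd ℂ) r₁) + (c : ℂ) = 0 := by
        have := congrArg (starRingEnd ℂ) hroot₁
        simpa [_root_.map_add, _root_.map_mul, _root_.map_pow, Complex.conj_ofReal] using this
      have h2 := hfac ((starRingEnd ℂ) r₁)
      rw [hcr] at h2
      rcases mul_eq_zero.1 h2.symm with h' | h'
      · left; exact sub_eq_zero.1 h'
      · right; exact sub_eq_zero.1 h'
    rcases hconj with h' | h'
    · have h1 : r₁.im = 0 := Complex.conj_eq_iff_im.1 h'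
      have h2 : r₂.im = 0 := by
        have := congrArg Complex.im hsum
        simp at this
        linarith
      rw [hc0, h1, h2]
      nlinarith
    · have h1 : r₂.re = r₁.re := by rw [← h']; simp
      have h2 : r₂.im = -r₁.im := by rw [← h']; simp
      rw [hc0, h1, h2]
      nlinarith [mul_pos_of_neg_of_neg hre₁ hre₁, sq_nonneg r₁.im]
  · rintro ⟨hb, hc'⟩ μ hμ
    have him : (μ ^ 2 + (b : ℂ) * μ + (c : ℂ)).im = 0 := by rw [hμ]; simp
    have hre : (μ ^ 2 + (b : ℂ) * μ + (c : ℂ)).re = 0 := by rw [hμ]; simp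
    simp [pow_two, Complex.mul_im, Complex.mul_re] at him hre
    rcases eq_or_ne μ.im 0 with h0 | h0
    · rw [h0] at hre
      nlinarith [hre]
    · have hz : μ.im * (2 * μ.re + b) = 0 := by ring_nf; ring_nf at him; linarith
      have h2 : 2 * μ.re + b = 0 := by
        rcases mul_eq_zero.1 hz with h | h
        · exact absurd h h0
        · exact h
      linarith

lemma jacF_eq_mul {s m : ℕ} (α β : Matrix (Fin s) (Fin m) ℕ)
    (κ : Fin m → ℝ) (x : Fin s → ℝ) :
    jacF α β κ x = stoich α β *
      (Matrix.of fun (j : Fin m) (l : Fin s) =>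
        κ j * ((∏ l' ∈ univ.erase l, x l' ^ (α l' j)) *
          ((α l j : ℝ) * x l ^ (α l j - 1)))) := by
  ext i l
  rw [Matrix.mul_apply]
  unfold jacF
  have hfun : (fun t => rateFun α β κ (Function.update x l t) i) =
      fun t => ∑ j, (stoich α β i j * κ j * ∏ l' ∈ univ.erase l, x l' ^ (α l' j)) * t ^ (α l j) := by
    funext t
    unfold rateFun
    refine Finset.sum_congr rfl fun j _ => ?_
    have hprod : (∏ l', Function.update x l t l' ^ (α l' j)) =
        t ^ (α l j) * ∏ l' ∈ univ.erase l, x l' ^ (α l' j) := by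
      rw [← Finset.mul_prod_erase univ _ (mem_univ l)]
      congr 1
      · rw [Function.update_self]
      · refine Finset.prod_congr rfl fun l' hl' => ?_
        rw [Function.update_of_ne (Finset.ne_of_mem_erase hl')]
    rw [hprod]; ring
  rw [hfun]
  have hder : HasDerivAt (fun t => ∑ j, (stoich α β i j * κ j * ∏ l' ∈ univ.erase l, x l' ^ (α l' j)) * t ^ (α l j))
      (∑ j, (stoich α β i j * κ j * ∏ l' ∈ univ.erase l, x l' ^ (α l' j)) *
        ((α l j : ℝ) * x l ^ (α l j - 1))) (x l) := by
    refine HasDerivAt.fun_sum fun j _ => ?_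
    exact (hasDerivAt_pow (α l j) (x l)).const_mul _
  rw [hder.deriv]
  refine Finset.sum_congr rfl fun j _ => ?_
  simp only [Matrix.of_apply]
  ring

/-- Intermediate matrix for the row-replacement argument: rows `piv k` with `k ∈ F` are replaced
by `X • (k-th row of W)`, the other rows are those of the characteristic matrix of `J`. -/
def auxB {s d : ℕ} (J : Matrix (Fin s) (Fin s) ℝ) (W : Matrix (Fin d) (Fin s) ℝ)
    (piv : Fin d → Fin s) (F : Finset (Fin d)) : Matrix (Fin s) (Fin s) (Polynomial ℝ) :=
  fun i l => if h : ∃ k, piv k = i then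
      (if Classical.choose h ∈ F then Polynomial.X * Polynomial.C (W (Classical.choose h) l)
        else J.charmatrix i l)
    else J.charmatrix i l

/-- The "reduced" matrix: rows `piv k` are the rows of `W`, other rows those of the
characteristic matrix. -/
def auxQ {s d : ℕ} (J : Matrix (Fin s) (Fin s) ℝ) (W : Matrix (Fin d) (Fin s) ℝ)
    (piv : Fin d → Fin s) : Matrix (Fin s) (Fin s) (Polynomial ℝ) :=
  fun i l => if h : ∃ k, piv k = i then Polynomial.C (W (Classical.choose h) l)
    else J.charmatrix i l

/-- Generic version of `jacH`. -/
def auxH {s d : ℕ} (J : Matrix (Fin s) (Fin s) ℝ) (W : Matrix (Fin d) (Fin s) ℝ)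
    (piv : Fin d → Fin s) : Matrix (Fin s) (Fin s) ℝ :=
  fun i l => if h : ∃ k, piv k = i then W (Classical.choose h) l else J i l

lemma choose_eq {s d : ℕ} {piv : Fin d → Fin s} (hpinj : Function.Injective piv)
    {i : Fin s} (h : ∃ k, piv k = i) (k : Fin d) (hk : piv k = i) :
    Classical.choose h = k := by
  apply hpinj
  rw [Classical.choose_spec h, hk]

lemma auxB_det {s d : ℕ} (J : Matrix (Fin s) (Fin s) ℝ) (W : Matrix (Fin d) (Fin s) ℝ)
    (piv : Fin d → Fin s) (hpinj : Function.Injective piv)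
    (hWJ : W * J = 0)
    (hlead : ∀ k, W k (piv k) = 1)
    (hred : ∀ k k', k' ≠ k → W k' (piv k) = 0)
    (F : Finset (Fin d)) :
    (auxB J W piv F).det = J.charpoly := by
  classical
  induction F using Finset.induction_on with
  | empty =>
    have : auxB J W piv (∅ : Finset (Fin d)) = J.charmatrix := by
      apply Matrix.ext; intro i l
      unfold auxB
      split <;> simp
    rw [this]
    rfl
  | @insert k F hk ih =>
    have hrow : auxB J W piv (insert k F) =
        (auxB J W piv F).updateRow (piv k)
          (∑ i, Polynomial.C (W k i) • (auxB J W piv F) i) := by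
      apply Matrix.ext; intro i l
      rcases eq_or_ne i (piv k) with rfl | hne
      · rw [Matrix.updateRow_self]
        have h : ∃ k', piv k' = piv k := ⟨k, rfl⟩
        have hch' : Classical.choose h = k := choose_eq hpinj h k rfl
        show (if h : ∃ k', piv k' = piv k then
            (if Classical.choose h ∈ insert k F then Polynomial.X * Polynomial.C (W (Classical.choose h) l)
              else J.charmatrix (piv k) l)
          else J.charmatrix (piv k) l) = _
        rw [dif_pos h, hch', if_pos (Finset.mem_insert_self k F)]
        have hBF : ∀ i' : Fin s, Polynomial.C (W k i') * auxB J W piv F i' l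
            = Polynomial.C (W k i') * J.charmatrix i' l := by
          intro i'
          unfold auxB
          split
          · rename_i h'
            split
            · rename_i h''
              have hz : W k i' = 0 := by
                have hi' : piv (Classical.choose h') = i' := Classical.choose_spec h'
                have hne' : k ≠ Classical.choose h' := by
                  rintro rfl; exact hk h''
                rw [← hi']
                exact hred (Classical.choose h') k hne'
              rw [hz]; simp
            · rfl
          · rfl
        have hsum2 : (∑ i', Polynomial.C (W k i') • auxB J W piv F i') l
            = ∑ i', Polynomial.C (W k i') * J.charmatrix i' l := by
          rw [Finset.sum_apply]
          exact Finset.sum_congr rfl fun i' _ => hBF i'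
        rw [hsum2]
        have hWJ' : ∑ i', W k i' * J i' l = 0 := by
          have := congrFun (congrFun hWJ k) l
          simpa [Matrix.mul_apply] using this
        have e1 : ∀ i' : Fin s, Polynomial.C (W k i') * J.charmatrix i' l
            = (if i' = l then Polynomial.X * Polynomial.C (W k l) else 0)
              - Polynomial.C (W k i' * J i' l) := by
          intro i'
          rw [charmatrix_apply, Matrix.diagonal_apply]
          split
          · rename_i h''; subst h''; rw [Polynomial.C_mul]; ring
          · rw [Polynomial.C_mul]; ring
        rw [Finset.sum_congr rfl fun i' _ => e1 i', Finset.sum_sub_distrib,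
          Finset.sum_ite_eq' univ l, if_pos (mem_univ l), ← map_sum, hWJ', map_zero, sub_zero]
      · rw [Matrix.updateRow_ne hne]
        show auxB J W piv (insert k F) i l = auxB J W piv F i l
        unfold auxB
        split
        · rename_i h'
          have hne' : Classical.choose h' ≠ k := by
            intro hc; apply hne; rw [← Classical.choose_spec h', hc]
          simp [Finset.mem_insert, hne']
        · rfl
    rw [hrow, Matrix.det_updateRow_sum]
    simp only [hlead k, Polynomial.C_1, one_smul]
    exact ih


lemma pivotFilterCard {s d : ℕ} (piv : Fin d → Fin s) (hpinj : Function.Injective piv) :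
    (univ.filter (fun i : Fin s => ∃ k, piv k = i)).card = d := by
  classical
  have hfil : univ.filter (fun i : Fin s => ∃ k, piv k = i) = univ.image piv := by
    ext i; simp [Finset.mem_image]
  rw [hfil, Finset.card_image_of_injective univ hpinj, Finset.card_univ, Fintype.card_fin]

lemma charpoly_eq_X_pow_mul {s d : ℕ} (J : Matrix (Fin s) (Fin s) ℝ)
    (W : Matrix (Fin d) (Fin s) ℝ) (piv : Fin d → Fin s) (hpinj : Function.Injective piv)
    (hWJ : W * J = 0) (hlead : ∀ k, W k (piv k) = 1)
    (hred : ∀ k k', k' ≠ k → W k' (piv k) = 0) :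
    J.charpoly = Polynomial.X ^ d * (auxQ J W piv).det := by
  classical
  have h1 := auxB_det J W piv hpinj hWJ hlead hred Finset.univ
  have h2 : auxB J W piv Finset.univ =
      Matrix.of fun i l => (if ∃ k, piv k = i then (Polynomial.X : ℝ[X]) else 1)
        * auxQ J W piv i l := by
    apply Matrix.ext; intro i l
    show auxB J W piv Finset.univ i l = _
    unfold auxB auxQ
    rcases Classical.em (∃ k, piv k = i) with h | h
    · simp [Matrix.of_apply, h]
    · simp [Matrix.of_apply, h]
  rw [← h1, h2, Matrix.det_mul_column]
  congr 1
  rw [Finset.prod_ite, Finset.prod_const, Finset.prod_const, pivotFilterCard piv hpinj]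
  simp

lemma auxQ_det_eval_zero {s d : ℕ} (J : Matrix (Fin s) (Fin s) ℝ)
    (W : Matrix (Fin d) (Fin s) ℝ) (piv : Fin d → Fin s) (hpinj : Function.Injective piv)
    (hsd : s = d + 2) :
    (auxQ J W piv).det.eval 0 = (auxH J W piv).det := by
  classical
  have h1 : (auxQ J W piv).det.eval 0 = ((auxQ J W piv).map (Polynomial.evalRingHom 0)).det := by
    rw [← Polynomial.coe_evalRingHom, RingHom.map_det, RingHom.mapMatrix_apply]
  have h2 : (auxQ J W piv).map (Polynomial.evalRingHom 0) =
      Matrix.of fun i l => (if ∃ k, piv k = i then (1:ℝ) else -1) * auxH J W piv i l := by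
    apply Matrix.ext; intro i l
    rw [Matrix.map_apply, Matrix.of_apply]
    show Polynomial.eval 0 (auxQ J W piv i l) = _
    unfold auxQ auxH
    rcases Classical.em (∃ k, piv k = i) with h | h
    · rw [dif_pos h, dif_pos h, if_pos h, Polynomial.eval_C, one_mul]
    · rw [dif_neg h, dif_neg h, if_neg h]
      by_cases hil : i = l
      · subst hil; rw [charmatrix_apply_eq]; simp
      · rw [charmatrix_apply_ne _ _ _ hil]; simp
  rw [h1, h2, Matrix.det_mul_column]
  have hcard : (univ.filter (fun i : Fin s => ¬ ∃ k, piv k = i)).card = 2 := by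
    have h3 := pivotFilterCard piv hpinj
    have h4 := Finset.card_filter_add_card_filter_not
      (s := (univ : Finset (Fin s))) (p := fun i : Fin s => ∃ k, piv k = i)
    rw [Finset.card_univ, Fintype.card_fin] at h4
    omega
  rw [Finset.prod_ite, Finset.prod_const, Finset.prod_const, hcard]
  simp

lemma mem_spectrum_iff_eval {n : ℕ} (M : Matrix (Fin n) (Fin n) ℂ) (μ : ℂ) :
    μ ∈ spectrum ℂ M ↔ M.charpoly.eval μ = 0 := by
  classical
  have key : ((algebraMap ℂ (Matrix (Fin n) (Fin n) ℂ)) μ - M).det = M.charpoly.eval μ := by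
    unfold Matrix.charpoly
    rw [← Polynomial.coe_evalRingHom, RingHom.map_det, RingHom.mapMatrix_apply]
    congr 1
    apply Matrix.ext; intro i l
    rw [Matrix.map_apply, charmatrix_apply, Matrix.algebraMap_eq_diagonal]
    by_cases h : i = l
    · subst h; simp
    · simp [Matrix.diagonal_apply_ne _ h]
  rw [spectrum.mem_iff, Matrix.isUnit_iff_isUnit_det, isUnit_iff_ne_zero, not_ne_iff, key]

/-- For a rank-two network (not necessarily zero-one), at any nondegenerate steady state:
all nonzero complex eigenvalues of `Jac_f` have negative real part iff the trace of `Jac_f` is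
negative and `det Jac_h > 0`. -/
theorem stmt8 {s m : ℕ} (α β : Matrix (Fin s) (Fin m) ℕ)
    (hnet : ∀ j, ∃ i, α i j ≠ β i j)
    (hrank : (stoich α β).rank = 2)
    (W : Matrix (Fin (s - (stoich α β).rank)) (Fin s) ℝ)
    (hWrank : W.rank = s - (stoich α β).rank)
    (hWN : W * stoich α β = 0)
    (piv : Fin (s - (stoich α β).rank) → Fin s)
    (hpiv : StrictMono piv)
    (hlead : ∀ k, W k (piv k) = 1)
    (hech : ∀ (k) (l : Fin s), (l : ℕ) < (piv k : ℕ) → W k l = 0)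
    (hred : ∀ k k', k' ≠ k → W k' (piv k) = 0)
    (κ : Fin m → ℝ) (hκ : ∀ j, 0 < κ j)
    (x : Fin s → ℝ)
    (hss : ∀ i, rateFun α β κ x i = 0)
    (hnd : (jacH α β W piv κ x).det ≠ 0) :
    (∀ μ ∈ spectrum ℂ ((jacF α β κ x).map Complex.ofReal), μ ≠ 0 → μ.re < 0) ↔
      (Matrix.trace (jacF α β κ x) < 0 ∧ 0 < (jacH α β W piv κ x).det) := by
  classical
  have hpinj : Function.Injective piv := hpiv.injective
  set J := jacF α β κ x with hJdef
  have hs2 : 2 ≤ s := by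
    have h := Matrix.rank_le_height (stoich α β)
    rw [hrank] at h
    exact h
  have hsd : s = (s - (stoich α β).rank) + 2 := by
    rw [hrank]
    omega
  have hWJ : W * J = 0 := by
    rw [hJdef, jacF_eq_mul, ← Matrix.mul_assoc, hWN, Matrix.zero_mul]
  have hch : J.charpoly = Polynomial.X ^ (s - (stoich α β).rank) * (auxQ J W piv).det :=
    charpoly_eq_X_pow_mul J W piv hpinj hWJ hlead hred
  set q := (auxQ J W piv).det with hqdef
  have hmonic : J.charpoly.Monic := Matrix.charpoly_monic J
  have hdeg : J.charpoly.natDegree = s := by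
    rw [Matrix.charpoly_natDegree_eq_dim, Fintype.card_fin]
  have hq0 : q ≠ 0 := by
    intro h
    rw [h, mul_zero] at hch
    exact hmonic.ne_zero hch
  have hXd : (Polynomial.X : ℝ[X]) ^ (s - (stoich α β).rank) ≠ 0 := pow_ne_zero _ Polynomial.X_ne_zero
  have hqdeg : q.natDegree = 2 := by
    have h := congrArg Polynomial.natDegree hch
    rw [hdeg, Polynomial.natDegree_mul hXd hq0, Polynomial.natDegree_X_pow] at h
    omega
  have hqmon : q.Monic := by
    have h := hmonic
    rw [hch] at h
    exact (Polynomial.monic_X_pow _).of_mul_monic_left h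
  have hNe : Nonempty (Fin s) := ⟨⟨0, by omega⟩⟩
  have hcoeff1 : q.coeff 1 = - Matrix.trace J := by
    have h1 : J.charpoly.coeff (1 + (s - (stoich α β).rank)) = q.coeff 1 := by
      rw [hch, Polynomial.coeff_X_pow_mul]
    have h2 := Matrix.trace_eq_neg_charpoly_coeff J
    rw [Fintype.card_fin] at h2
    have h3 : s - 1 = 1 + (s - (stoich α β).rank) := by omega
    rw [h3, h1] at h2
    linarith
  have hH : jacH α β W piv κ x = auxH J W piv := rfl
  have hcoeff0 : q.coeff 0 = (jacH α β W piv κ x).det := by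
    rw [Polynomial.coeff_zero_eq_eval_zero, hqdef,
      auxQ_det_eval_zero J W piv hpinj hsd, hH]
  set b : ℝ := - Matrix.trace J with hbdef
  set c : ℝ := (jacH α β W piv κ x).det with hcdef
  have hcne : c ≠ 0 := hnd
  have hqc_eval : ∀ μ : ℂ, (q.map Complex.ofRealHom).eval μ
      = μ ^ 2 + (b : ℂ) * μ + (c : ℂ) := by
    intro μ
    have hm : (q.map Complex.ofRealHom).Monic := hqmon.map _
    have hd2 : (q.map Complex.ofRealHom).natDegree = 2 := by
      rw [hqmon.natDegree_map]; exact hqdeg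
    rw [Polynomial.eval_eq_sum_range, hd2]
    rw [Finset.sum_range_succ, Finset.sum_range_succ, Finset.sum_range_one]
    have hc2 : (q.map Complex.ofRealHom).coeff 2 = 1 := by
      have h := hm.coeff_natDegree
      rw [hd2] at h
      exact h
    rw [hc2, Polynomial.coeff_map, Polynomial.coeff_map, hcoeff1, hcoeff0]
    simp only [Complex.ofRealHom_eq_coe, ← hbdef, ← hcdef]
    push_cast
    ring
  have hMceq : (jacF α β κ x).map Complex.ofReal = J.map (Complex.ofRealHom : ℝ →+* ℂ) := rfl
  have hcpMc : ((jacF α β κ x).map Complex.ofReal).charpoly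
      = Polynomial.X ^ (s - (stoich α β).rank) * q.map Complex.ofRealHom := by
    rw [hMceq, Matrix.charpoly_map, hch, Polynomial.map_mul, Polynomial.map_pow,
      Polynomial.map_X]
  have hev : ∀ μ : ℂ, ((jacF α β κ x).map Complex.ofReal).charpoly.eval μ
      = μ ^ (s - (stoich α β).rank) * (μ ^ 2 + (b : ℂ) * μ + (c : ℂ)) := by
    intro μ
    rw [hcpMc, Polynomial.eval_mul, Polynomial.eval_pow, Polynomial.eval_X, hqc_eval]
  have key : ∀ μ : ℂ, (μ ∈ spectrum ℂ ((jacF α β κ x).map Complex.ofReal) ∧ μ ≠ 0)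
      ↔ μ ^ 2 + (b : ℂ) * μ + (c : ℂ) = 0 := by
    intro μ
    rw [mem_spectrum_iff_eval, hev]
    constructor
    · rintro ⟨h1, h2⟩
      rcases mul_eq_zero.1 h1 with h | h
      · exact absurd (pow_eq_zero_iff'.1 h).1 h2
      · exact h
    · intro h
      have hμ0 : μ ≠ 0 := by
        rintro rfl
        simp at h
        exact hcne (by exact_mod_cast h)
      exact ⟨by rw [h, mul_zero], hμ0⟩
  constructor
  · intro hall
    have h := (quad_roots_neg_re_iff b c).1
      (fun μ hμ => hall μ ((key μ).2 hμ).1 ((key μ).2 hμ).2)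
    constructor
    · have := h.1
      rw [hbdef] at this
      linarith
    · exact h.2
  · rintro ⟨htr, hdet⟩ μ hμs hμn
    refine (quad_roots_neg_re_iff b c).2 ⟨?_, hdet⟩ μ ((key μ).1 ⟨hμs, hμn⟩)
    rw [hbdef]
    linarith
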